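/- Every tree is a 2-dimensional poset: if (V, ⊴) is a tree, then there exist linear orders ≤₁ and ≤₂ on V such that for all x, y ∈ V, x ⊴ y if and only if x ≤₁ y and x ≤₂ y. -/

import Mathlib

universe u

/-- A partial order is a tree if it is well-founded and the set of strict
predecessors of every element is a chain. -/
def IsTreeOrder (T : Type u) [PartialOrder T] : Prop :=
  WellFounded ((· < ·) : T → T → Prop) ∧ ∀ v : T, IsChain (· ≤ ·) {u : T | u < v}

section TreeAux

variable {V : Type u} [PartialOrder V]

/-- Any two elements below a common element are comparable. -/
lemma tree_below_comp (hch : ∀ v : V, IsChain (· ≤ ·) {u : V | u < v})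
    {x u v : V} (hu : u ≤ x) (hv : v ≤ x) : u ≤ v ∨ v ≤ u := by
  rcases eq_or_lt_of_le hu with rfl | hu'
  · right; exact hv
  rcases eq_or_lt_of_le hv with rfl | hv'
  · left; exact hu'.le
  rcases eq_or_ne u v with rfl | hne
  · left; exact le_rfl
  exact hch x hu' hv' hne

open Classical in
/-- The branch point: least element below `x` but not below `y`. -/
noncomputable def br (hwf : WellFounded ((· < ·) : V → V → Prop)) (x y : V) : V :=
  if h : x ≤ y then x else hwf.min {u | u ≤ x ∧ ¬ u ≤ y} ⟨x, le_rfl, h⟩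

lemma br_le (hwf : WellFounded ((· < ·) : V → V → Prop)) {x y : V} (h : ¬ x ≤ y) :
    br hwf x y ≤ x := by
  have := hwf.min_mem {u | u ≤ x ∧ ¬ u ≤ y} ⟨x, le_rfl, h⟩
  rw [br, dif_neg h]; exact this.1

lemma br_not_le (hwf : WellFounded ((· < ·) : V → V → Prop)) {x y : V} (h : ¬ x ≤ y) :
    ¬ br hwf x y ≤ y := by
  have := hwf.min_mem {u | u ≤ x ∧ ¬ u ≤ y} ⟨x, le_rfl, h⟩
  rw [br, dif_neg h]; exact this.2

lemma br_not_lt (hwf : WellFounded ((· < ·) : V → V → Prop)) {x y : V} (h : ¬ x ≤ y)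
    {u : V} (hu : u ≤ x) (hu' : ¬ u ≤ y) : ¬ u < br hwf x y := by
  have := hwf.not_lt_min {u | u ≤ x ∧ ¬ u ≤ y}
    (show u ∈ {u | u ≤ x ∧ ¬ u ≤ y} from ⟨hu, hu'⟩)
  rw [br, dif_neg h]; exact this

/-- `br x y` is the least element of `{u | u ≤ x ∧ ¬ u ≤ y}`. -/
lemma br_least (hwf : WellFounded ((· < ·) : V → V → Prop))
    (hch : ∀ v : V, IsChain (· ≤ ·) {u : V | u < v}) {x y : V} (h : ¬ x ≤ y)
    {u : V} (hu : u ≤ x) (hu' : ¬ u ≤ y) : br hwf x y ≤ u := by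
  rcases tree_below_comp hch hu (br_le hwf h) with h1 | h1
  · rcases eq_or_lt_of_le h1 with h1' | h1'
    · exact le_of_eq h1'.symm
    · exact absurd h1' (br_not_lt hwf h hu hu')
  · exact h1

lemma br_min (hwf : WellFounded ((· < ·) : V → V → Prop)) {x y : V} (h : ¬ x ≤ y)
    {u : V} (hu : u ≤ x) (hlt : u < br hwf x y) : u ≤ y := by
  by_contra hc
  exact absurd hlt (br_not_lt hwf h hu hc)

/-- For incomparable `x y`, the two branch points are incomparable. -/
lemma br_incomp (hwf : WellFounded ((· < ·) : V → V → Prop)) {x y : V}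
    (hxy : ¬ x ≤ y) (hyx : ¬ y ≤ x) : ¬ br hwf x y ≤ br hwf y x :=
  fun h => br_not_le hwf hxy (h.trans (br_le hwf hyx))

/-- Strict predecessors of `br x y` are strict predecessors of `br y x`. -/
lemma br_pred (hwf : WellFounded ((· < ·) : V → V → Prop))
    (hch : ∀ v : V, IsChain (· ≤ ·) {u : V | u < v}) {x y : V}
    (hxy : ¬ x ≤ y) (hyx : ¬ y ≤ x) {u : V} (hu : u < br hwf x y) :
    u < br hwf y x := by
  have hux : u ≤ x := hu.le.trans (br_le hwf hxy)
  have huy : u ≤ y := br_min hwf hxy hux hu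
  rcases tree_below_comp hch huy (br_le hwf hyx) with h1 | h1
  · rcases eq_or_lt_of_le h1 with h1' | h1'
    · exact absurd (h1' ▸ hux) (br_not_le hwf hyx)
    · exact h1'
  · exact absurd (h1.trans hux) (br_not_le hwf hyx)

/-- Key shifting lemma: if `p ≤ q` and `p, r` are incomparable then the branch
points of the pair `(p, r)` agree with those of `(q, r)`. -/
lemma br_shift (hwf : WellFounded ((· < ·) : V → V → Prop))
    (hch : ∀ v : V, IsChain (· ≤ ·) {u : V | u < v}) {p q r : V}
    (hpq : p ≤ q) (hpr : ¬ p ≤ r) (hrp : ¬ r ≤ p) :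
    br hwf p r = br hwf q r ∧ br hwf r p = br hwf r q := by
  have hqr : ¬ q ≤ r := fun h => hpr (hpq.trans h)
  have hrq : ¬ r ≤ q := by
    intro h
    rcases tree_below_comp hch hpq h with h1 | h1
    · exact hpr h1
    · exact hrp h1
  constructor
  · have hcq : br hwf q r ≤ q := br_le hwf hqr
    have hcp : br hwf q r ≤ p := by
      rcases tree_below_comp hch hpq hcq with h1 | h1
      · rcases eq_or_lt_of_le h1 with h1' | h1'
        · exact le_of_eq h1'.symm
        · exact absurd (br_min hwf hqr hpq h1') hpr
      · exact h1
    exact le_antisymm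
      (br_least hwf hch hpr hcp (br_not_le hwf hqr))
      (br_least hwf hch hqr ((br_le hwf hpr).trans hpq) (br_not_le hwf hpr))
  · have hd : br hwf r q ≤ r := br_le hwf hrq
    have hdp : ¬ br hwf r q ≤ p := fun h => br_not_le hwf hrq (h.trans hpq)
    have he : br hwf r p ≤ r := br_le hwf hrp
    have heq : ¬ br hwf r p ≤ q := by
      intro h
      rcases tree_below_comp hch h hpq with h1 | h1
      · exact br_not_le hwf hrp h1
      · rcases eq_or_lt_of_le h1 with h1' | h1'
        · exact br_not_le hwf hrp (ge_of_eq h1')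
        · exact hpr (h1'.le.trans he)
    exact le_antisymm
      (br_least hwf hch hrp hd hdp)
      (br_least hwf hch hrq he heq)

/-- Characterization of the branch point. -/
lemma br_eq (hwf : WellFounded ((· < ·) : V → V → Prop))
    (hch : ∀ v : V, IsChain (· ≤ ·) {u : V | u < v}) {x z w : V}
    (hxz : ¬ x ≤ z) (hw : w ≤ x) (hwz : ¬ w ≤ z)
    (hleast : ∀ u, u ≤ x → ¬ u ≤ z → w ≤ u) : br hwf x z = w :=
  le_antisymm (br_least hwf hch hxz hw hwz)
    (hleast _ (br_le hwf hxz) (br_not_le hwf hxz))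

/-- The tie-breaking linearization of the tree order by a strict relation `r`. -/
def tle (hwf : WellFounded ((· < ·) : V → V → Prop)) (r : V → V → Prop)
    (x y : V) : Prop :=
  x ≤ y ∨ (¬ x ≤ y ∧ ¬ y ≤ x ∧ r (br hwf x y) (br hwf y x))

lemma tle_refl (hwf : WellFounded ((· < ·) : V → V → Prop))
    {r : V → V → Prop} (x : V) : tle hwf r x x := Or.inl le_rfl

lemma tle_total (hwf : WellFounded ((· < ·) : V → V → Prop))
    {r : V → V → Prop} (htri : ∀ a b : V, r a b ∨ a = b ∨ r b a) (x y : V) :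
    tle hwf r x y ∨ tle hwf r y x := by
  by_cases hxy : x ≤ y
  · exact Or.inl (Or.inl hxy)
  by_cases hyx : y ≤ x
  · exact Or.inr (Or.inl hyx)
  rcases htri (br hwf x y) (br hwf y x) with h | h | h
  · exact Or.inl (Or.inr ⟨hxy, hyx, h⟩)
  · exact absurd (le_of_eq h) (br_incomp hwf hxy hyx)
  · exact Or.inr (Or.inr ⟨hyx, hxy, h⟩)

lemma tle_antisymm (hwf : WellFounded ((· < ·) : V → V → Prop))
    {r : V → V → Prop} (htr : ∀ a b c : V, r a b → r b c → r a c)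
    (hirr : ∀ a : V, ¬ r a a) {x y : V}
    (h1 : tle hwf r x y) (h2 : tle hwf r y x) : x = y := by
  rcases h1 with h1 | ⟨h1a, h1b, h1c⟩
  · rcases h2 with h2 | ⟨h2a, h2b, h2c⟩
    · exact le_antisymm h1 h2
    · exact absurd h1 h2b
  · rcases h2 with h2 | ⟨h2a, h2b, h2c⟩
    · exact absurd h2 h1b
    · exact absurd (htr _ _ _ h1c h2c) (hirr _)

lemma tle_trans (hwf : WellFounded ((· < ·) : V → V → Prop))
    (hch : ∀ v : V, IsChain (· ≤ ·) {u : V | u < v})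
    {r : V → V → Prop} (htr : ∀ a b c : V, r a b → r b c → r a c)
    (hirr : ∀ a : V, ¬ r a a) {x y z : V}
    (h1 : tle hwf r x y) (h2 : tle hwf r y z) : tle hwf r x z := by
  rcases h1 with h1 | ⟨hxy, hyx, hr1⟩
  · rcases h2 with h2 | ⟨hyz, hzy, hr2⟩
    · exact Or.inl (h1.trans h2)
    · by_cases hxz : x ≤ z
      · exact Or.inl hxz
      have hzx : ¬ z ≤ x := fun h => hzy (h.trans h1)
      obtain ⟨e1, e2⟩ := br_shift hwf hch h1 hxz hzx
      exact Or.inr ⟨hxz, hzx, by rw [e1, e2]; exact hr2⟩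
  · rcases h2 with h2 | ⟨hyz, hzy, hr2⟩
    · -- x ∥ y, y ≤ z
      have hxz : ¬ x ≤ z := by
        intro h
        rcases tree_below_comp hch h h2 with h1 | h1
        · exact hxy h1
        · exact hyx h1
      have hzx : ¬ z ≤ x := fun h => hyx (h2.trans h)
      obtain ⟨e1, e2⟩ := br_shift hwf hch h2 hyx hxy
      exact Or.inr ⟨hxz, hzx, by rw [← e1, ← e2]; exact hr1⟩
    · -- x ∥ y, y ∥ z
      by_cases hxz : x ≤ z
      · exact Or.inl hxz
      by_cases hzx : z ≤ x
      · obtain ⟨e1, e2⟩ := br_shift hwf hch hzx hzy hyz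
        rw [e1] at hr2; rw [← e2] at hr1
        exact absurd (htr _ _ _ hr1 hr2) (hirr _)
      -- the genuine case: x ∥ z
      refine Or.inr ⟨hxz, hzx, ?_⟩
      have halex : br hwf x y ≤ x := br_le hwf hxy
      have hanley : ¬ br hwf x y ≤ y := br_not_le hwf hxy
      have hbley : br hwf y x ≤ y := br_le hwf hyx
      have hbnlex : ¬ br hwf y x ≤ x := br_not_le hwf hyx
      have hcley : br hwf y z ≤ y := br_le hwf hyz
      have hcnlez : ¬ br hwf y z ≤ z := br_not_le hwf hyz
      have hdlez : br hwf z y ≤ z := br_le hwf hzy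
      have hdnley : ¬ br hwf z y ≤ y := br_not_le hwf hzy
      rcases tree_below_comp hch hbley hcley with hbc | hcb
      · rcases eq_or_lt_of_le hbc with hbceq | hbclt
        · -- br y x = br y z : br x z = br x y, br z x = br z y, conclude by
          -- transitivity of r through the common value
          have hrad : r (br hwf x y) (br hwf z y) := htr _ _ _ hr1 (hbceq ▸ hr2)
          have hanlez : ¬ br hwf x y ≤ z := by
            intro h
            rcases tree_below_comp hch h hdlez with h1 | h1
            · rcases eq_or_lt_of_le h1 with h1' | h1'
              · exact hirr _ (h1' ▸ hrad)
              · exact hanley (br_min hwf hzy h h1')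
            · rcases eq_or_lt_of_le h1 with h1' | h1'
              · exact hirr _ (h1' ▸ hrad)
              · have : br hwf z y < br hwf y x := br_pred hwf hch hxy hyx h1'
                rw [hbceq] at this
                exact br_incomp hwf hzy hyz this.le
          have e1 : br hwf x z = br hwf x y := by
            refine br_eq hwf hch hxz halex hanlez ?_
            intro u hu hu'
            rcases tree_below_comp hch hu halex with h1 | h1
            · rcases eq_or_lt_of_le h1 with h1' | h1'
              · exact le_of_eq h1'.symm
              · have huc : u < br hwf y z := by
                  rw [← hbceq]; exact br_pred hwf hch hxy hyx h1'
                exact absurd (br_min hwf hyz (huc.le.trans hcley) huc) hu'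
            · exact h1
          have hdnlex : ¬ br hwf z y ≤ x := by
            intro h
            rcases tree_below_comp hch h halex with h1 | h1
            · rcases eq_or_lt_of_le h1 with h1' | h1'
              · exact hirr _ (h1' ▸ hrad)
              · have : br hwf z y < br hwf y x := br_pred hwf hch hxy hyx h1'
                rw [hbceq] at this
                exact br_incomp hwf hzy hyz this.le
            · rcases eq_or_lt_of_le h1 with h1' | h1'
              · exact hirr _ (h1' ▸ hrad)
              · have : br hwf x y < br hwf y z := br_pred hwf hch hzy hyz h1'
                rw [← hbceq] at this
                exact br_incomp hwf hxy hyx this.le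
          have e2 : br hwf z x = br hwf z y := by
            refine br_eq hwf hch hzx hdlez hdnlex ?_
            intro u hu hu'
            rcases tree_below_comp hch hu hdlez with h1 | h1
            · rcases eq_or_lt_of_le h1 with h1' | h1'
              · exact le_of_eq h1'.symm
              · have hub : u < br hwf y x := by
                  rw [hbceq]; exact br_pred hwf hch hzy hyz h1'
                exact absurd (br_min hwf hyx (hub.le.trans hbley) hub) hu'
            · exact h1
          rw [e1, e2]; exact hrad
        · -- br y x < br y z : br x z = br x y, br z x = br y x
          have hblez : br hwf y x ≤ z := br_min hwf hyz hbley hbclt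
          have hanlez : ¬ br hwf x y ≤ z := by
            intro h
            rcases tree_below_comp hch h hblez with h1 | h1
            · exact br_incomp hwf hxy hyx h1
            · exact br_incomp hwf hyx hxy h1
          have e1 : br hwf x z = br hwf x y := by
            refine br_eq hwf hch hxz halex hanlez ?_
            intro u hu hu'
            rcases tree_below_comp hch hu halex with h1 | h1
            · rcases eq_or_lt_of_le h1 with h1' | h1'
              · exact le_of_eq h1'.symm
              · have hub : u < br hwf y x := br_pred hwf hch hxy hyx h1'
                have huc : u < br hwf y z := hub.trans hbclt
                exact absurd (br_min hwf hyz (huc.le.trans hcley) huc) hu'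
            · exact h1
          have e2 : br hwf z x = br hwf y x := by
            refine br_eq hwf hch hzx hblez hbnlex ?_
            intro u hu hu'
            rcases tree_below_comp hch hu hblez with h1 | h1
            · rcases eq_or_lt_of_le h1 with h1' | h1'
              · exact le_of_eq h1'.symm
              · exact absurd (br_min hwf hyx (h1'.le.trans hbley) h1') hu'
            · exact h1
          rw [e1, e2]; exact hr1
      · rcases eq_or_lt_of_le hcb with hcbeq | hcblt
        · -- br y z = br y x : symmetric to the first case
          have hrad : r (br hwf x y) (br hwf z y) := htr _ _ _ hr1 (hcbeq.symm ▸ hr2)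
          have hanlez : ¬ br hwf x y ≤ z := by
            intro h
            rcases tree_below_comp hch h hdlez with h1 | h1
            · rcases eq_or_lt_of_le h1 with h1' | h1'
              · exact hirr _ (h1' ▸ hrad)
              · exact hanley (br_min hwf hzy h h1')
            · rcases eq_or_lt_of_le h1 with h1' | h1'
              · exact hirr _ (h1' ▸ hrad)
              · have : br hwf z y < br hwf y x := br_pred hwf hch hxy hyx h1'
                rw [← hcbeq] at this
                exact br_incomp hwf hzy hyz this.le
          have e1 : br hwf x z = br hwf x y := by
            refine br_eq hwf hch hxz halex hanlez ?_
            intro u hu hu'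
            rcases tree_below_comp hch hu halex with h1 | h1
            · rcases eq_or_lt_of_le h1 with h1' | h1'
              · exact le_of_eq h1'.symm
              · have huc : u < br hwf y z := by
                  rw [hcbeq]; exact br_pred hwf hch hxy hyx h1'
                exact absurd (br_min hwf hyz (huc.le.trans hcley) huc) hu'
            · exact h1
          have hdnlex : ¬ br hwf z y ≤ x := by
            intro h
            rcases tree_below_comp hch h halex with h1 | h1
            · rcases eq_or_lt_of_le h1 with h1' | h1'
              · exact hirr _ (h1' ▸ hrad)
              · have : br hwf z y < br hwf y x := br_pred hwf hch hxy hyx h1'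
                rw [← hcbeq] at this
                exact br_incomp hwf hzy hyz this.le
            · rcases eq_or_lt_of_le h1 with h1' | h1'
              · exact hirr _ (h1' ▸ hrad)
              · have : br hwf x y < br hwf y z := br_pred hwf hch hzy hyz h1'
                rw [hcbeq] at this
                exact br_incomp hwf hxy hyx this.le
          have e2 : br hwf z x = br hwf z y := by
            refine br_eq hwf hch hzx hdlez hdnlex ?_
            intro u hu hu'
            rcases tree_below_comp hch hu hdlez with h1 | h1
            · rcases eq_or_lt_of_le h1 with h1' | h1'
              · exact le_of_eq h1'.symm
              · have hub : u < br hwf y x := by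
                  rw [← hcbeq]; exact br_pred hwf hch hzy hyz h1'
                exact absurd (br_min hwf hyx (hub.le.trans hbley) hub) hu'
            · exact h1
          rw [e1, e2]; exact hrad
        · -- br y z < br y x : br x z = br y z, br z x = br z y
          have hclex : br hwf y z ≤ x := br_min hwf hyx hcley hcblt
          have e1 : br hwf x z = br hwf y z := by
            refine br_eq hwf hch hxz hclex hcnlez ?_
            intro u hu hu'
            rcases tree_below_comp hch hu hclex with h1 | h1
            · rcases eq_or_lt_of_le h1 with h1' | h1'
              · exact le_of_eq h1'.symm
              · exact absurd (br_min hwf hyz (h1'.le.trans hcley) h1') hu'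
            · exact h1
          have hdnlex : ¬ br hwf z y ≤ x := by
            intro h
            rcases tree_below_comp hch h hclex with h1 | h1
            · exact br_incomp hwf hzy hyz h1
            · exact br_incomp hwf hyz hzy h1
          have e2 : br hwf z x = br hwf z y := by
            refine br_eq hwf hch hzx hdlez hdnlex ?_
            intro u hu hu'
            rcases tree_below_comp hch hu hdlez with h1 | h1
            · rcases eq_or_lt_of_le h1 with h1' | h1'
              · exact le_of_eq h1'.symm
              · have huc : u < br hwf y z := br_pred hwf hch hzy hyz h1'
                have hub : u < br hwf y x := huc.trans hcblt
                exact absurd (br_min hwf hyx (hub.le.trans hbley) hub) hu'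
            · exact h1
          rw [e1, e2]; exact hr2

lemma tle_isLinearOrder (hwf : WellFounded ((· < ·) : V → V → Prop))
    (hch : ∀ v : V, IsChain (· ≤ ·) {u : V | u < v})
    {r : V → V → Prop} (htri : ∀ a b : V, r a b ∨ a = b ∨ r b a)
    (htr : ∀ a b c : V, r a b → r b c → r a c)
    (hirr : ∀ a : V, ¬ r a a) : IsLinearOrder V (tle hwf r) where
  refl := tle_refl hwf
  trans := fun _ _ _ h1 h2 => tle_trans hwf hch htr hirr h1 h2
  antisymm := fun _ _ h1 h2 => tle_antisymm hwf htr hirr h1 h2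
  total := tle_total hwf htri

end TreeAux

/-- Every tree is a 2-dimensional poset: its order is the intersection of two
linear orders on its underlying set. -/
theorem tree_is_twoDim (V : Type u) [PartialOrder V] (htree : IsTreeOrder V) :
    ∃ le₁ le₂ : V → V → Prop, IsLinearOrder V le₁ ∧ IsLinearOrder V le₂ ∧
      ∀ x y : V, x ≤ y ↔ (le₁ x y ∧ le₂ x y) := by
  obtain ⟨hwf, hch⟩ := htree
  let r : V → V → Prop := WellOrderingRel
  have htri : ∀ a b : V, r a b ∨ a = b ∨ r b a := fun a b => trichotomous a b
  have htr : ∀ a b c : V, r a b → r b c → r a c := fun _ _ _ h1 h2 =>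
    IsTrans.trans _ _ _ h1 h2
  have hirr : ∀ a : V, ¬ r a a := fun a => irrefl a
  have htri' : ∀ a b : V, (flip r) a b ∨ a = b ∨ (flip r) b a := fun a b => by
    rcases htri a b with h | h | h
    · exact Or.inr (Or.inr h)
    · exact Or.inr (Or.inl h)
    · exact Or.inl h
  have htr' : ∀ a b c : V, (flip r) a b → (flip r) b c → (flip r) a c :=
    fun a b c h1 h2 => htr _ _ _ h2 h1
  have hirr' : ∀ a : V, ¬ (flip r) a a := hirr
  refine ⟨tle hwf r, tle hwf (flip r),
    tle_isLinearOrder hwf hch htri htr hirr,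
    tle_isLinearOrder hwf hch htri' htr' hirr', fun x y => ?_⟩
  constructor
  · intro h; exact ⟨Or.inl h, Or.inl h⟩
  · rintro ⟨h1 | ⟨_, _, h1⟩, h2 | ⟨_, _, h2⟩⟩
    · exact h1
    · exact h1
    · exact h2
    · exact absurd (htr _ _ _ h1 h2) (hirr _)
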